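/- Maximal daemonic gain for mixtures of Bell states: for the two-qubit state ρ_SA = (|00⟩⟨00| + |11⟩⟨11| + C(|00⟩⟨11| + |11⟩⟨00|))/2 with 0 ≤ C ≤ 1 and system Hamiltonian H_S = −σ_z, the reduced state is ρ_S = 1/2, so W = 0, while measuring the ancilla in the computational basis yields pure conditional states |0⟩ and |1⟩ and hence W_{{Π_a}} = 1; therefore δW = 1 (the maximum possible) independently of C. -/

import Mathlib

open Matrix Kronecker BigOperators ComplexOrder

noncomputable section

/-- Partial trace over the second (ancilla) factor. -/
def ptrA {d m : ℕ} (ρ : Matrix (Fin d × Fin m) (Fin d × Fin m) ℂ) :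
    Matrix (Fin d) (Fin d) ℂ := fun i j => ∑ a, ρ (i, a) (j, a)

/-- Partial trace over the first (system) factor. -/
def ptrS {d m : ℕ} (ρ : Matrix (Fin d × Fin m) (Fin d × Fin m) ℂ) :
    Matrix (Fin m) (Fin m) ℂ := fun x y => ∑ i, ρ (i, x) (i, y)

/-- Probability of outcome corresponding to ancilla projector `P`. -/
def outcomeProb {d m : ℕ} (ρ : Matrix (Fin d × Fin m) (Fin d × Fin m) ℂ)
    (P : Matrix (Fin m) (Fin m) ℂ) : ℝ :=
  ((((1 : Matrix (Fin d) (Fin d) ℂ)) ⊗ₖ P) * ρ).trace.re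

/-- Normalized conditional state of the system after ancilla outcome `P`. -/
def condState {d m : ℕ} (ρ : Matrix (Fin d × Fin m) (Fin d × Fin m) ℂ)
    (P : Matrix (Fin m) (Fin m) ℂ) : Matrix (Fin d) (Fin d) ℂ :=
  (outcomeProb ρ P)⁻¹ •
    ptrA (((1 : Matrix (Fin d) (Fin d) ℂ) ⊗ₖ P) * ρ *
      ((1 : Matrix (Fin d) (Fin d) ℂ) ⊗ₖ P))

/-- Passive energy `∑ₖ rₖ εₖ`: decreasing eigenvalues of `σ` paired with the
increasingly ordered energies `ε`. -/
def passiveEnergy {d : ℕ} (ε : Fin d → ℝ) (σ : Matrix (Fin d) (Fin d) ℂ) : ℝ :=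
  if h : σ.IsHermitian then
    ∑ k, (h.eigenvalues ∘ (Tuple.sort h.eigenvalues)) k.rev * ε k
  else 0

/-- The daemonic gain `δW`: supremum over complete projective ancilla
measurements of `W_{Π} - W`. -/
def deltaW {d m : ℕ} (ε : Fin d → ℝ)
    (ρ : Matrix (Fin d × Fin m) (Fin d × Fin m) ℂ) : ℝ :=
  sSup {g : ℝ | ∃ (n : ℕ) (P : Fin n → Matrix (Fin m) (Fin m) ℂ),
    (∀ a, (P a).IsHermitian) ∧ (∀ a b, P a * P b = if a = b then P a else 0) ∧
    (∑ a, P a = 1) ∧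
    g = passiveEnergy ε (ptrA ρ) -
      ∑ a, outcomeProb ρ (P a) * passiveEnergy ε (condState ρ (P a))}

end

/-- The two-qubit state (|00⟩⟨00| + |11⟩⟨11| + C(|00⟩⟨11| + |11⟩⟨00|))/2. -/
noncomputable def bellMix (C : ℝ) :
    Matrix (Fin 2 × Fin 2) (Fin 2 × Fin 2) ℂ := fun p q =>
  if (p = ((0 : Fin 2), (0 : Fin 2)) ∧ q = ((0 : Fin 2), (0 : Fin 2))) ∨
     (p = ((1 : Fin 2), (1 : Fin 2)) ∧ q = ((1 : Fin 2), (1 : Fin 2))) then (1/2 : ℂ)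
  else if (p = ((0 : Fin 2), (0 : Fin 2)) ∧ q = ((1 : Fin 2), (1 : Fin 2))) ∨
          (p = ((1 : Fin 2), (1 : Fin 2)) ∧ q = ((0 : Fin 2), (0 : Fin 2))) then
    ((C / 2 : ℝ) : ℂ)
  else 0

/-- The computational-basis measurement on the ancilla qubit. -/
noncomputable def compMeas : Fin 2 → Matrix (Fin 2) (Fin 2) ℂ :=
  ![!![1, 0; 0, 0], !![0, 0; 0, 1]]


open Matrix Kronecker

lemma trace_eq_sum_eig {n : Type*} [Fintype n] [DecidableEq n] {A : Matrix n n ℂ}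
    (hA : A.IsHermitian) : A.trace = ∑ i, (hA.eigenvalues i : ℂ) := by
  exact hA.trace_eq_sum_eigenvalues

lemma re_trace_eq_sum_eig {n : Type*} [Fintype n] [DecidableEq n] {A : Matrix n n ℂ}
    (hA : A.IsHermitian) : A.trace.re = ∑ i, hA.eigenvalues i := by
  rw [trace_eq_sum_eig hA]
  simp

lemma passive2 {σ : Matrix (Fin 2) (Fin 2) ℂ} (h : σ.IsHermitian) :
    passiveEnergy ![(-1 : ℝ), 1] σ =
      (h.eigenvalues ∘ (Tuple.sort h.eigenvalues)) 0 -
      (h.eigenvalues ∘ (Tuple.sort h.eigenvalues)) 1 := by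
  rw [passiveEnergy, dif_pos h, Fin.sum_univ_two]
  have h0 : (0 : Fin 2).rev = 1 := by decide
  have h1 : (1 : Fin 2).rev = 0 := by decide
  rw [h0, h1]
  simp
  ring

lemma passive2_ge {σ : Matrix (Fin 2) (Fin 2) ℂ} (h : σ.PosSemidef) :
    -σ.trace.re ≤ passiveEnergy ![(-1 : ℝ), 1] σ := by
  rw [passive2 h.1]
  have hsum : (h.1.eigenvalues ∘ (Tuple.sort h.1.eigenvalues)) 0 +
      (h.1.eigenvalues ∘ (Tuple.sort h.1.eigenvalues)) 1 = σ.trace.re := by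
    rw [re_trace_eq_sum_eig h.1, ← Equiv.sum_comp (Tuple.sort h.1.eigenvalues) h.1.eigenvalues,
      Fin.sum_univ_two]
    rfl
  have h0 : 0 ≤ (h.1.eigenvalues ∘ (Tuple.sort h.1.eigenvalues)) 0 := h.eigenvalues_nonneg _
  have h1 : 0 ≤ (h.1.eigenvalues ∘ (Tuple.sort h.1.eigenvalues)) 1 := h.eigenvalues_nonneg _
  linarith


lemma passive2_projlike {σ : Matrix (Fin 2) (Fin 2) ℂ} (h : σ.PosSemidef)
    (htr : σ.trace = 1) (hdet : σ.det = 0) :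
    passiveEnergy ![(-1 : ℝ), 1] σ = -1 := by
  rw [passive2 h.1]
  set g := h.1.eigenvalues ∘ (Tuple.sort h.1.eigenvalues) with hg
  have hsum : g 0 + g 1 = 1 := by
    have e1 : g 0 + g 1 = ∑ k, g k := (Fin.sum_univ_two g).symm
    have e2 : ∑ k, g k = ∑ i, h.1.eigenvalues i := by
      simp only [hg, Function.comp]
      exact Equiv.sum_comp _ _
    have e3 := re_trace_eq_sum_eig h.1
    rw [htr, Complex.one_re] at e3
    rw [e1, e2, ← e3]
  have hprod : g 0 * g 1 = 0 := by
    have e1 : g 0 * g 1 = ∏ k, g k := (Fin.prod_univ_two g).symm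
    have e2 : ∏ k, g k = ∏ i, h.1.eigenvalues i := by
      simp only [hg, Function.comp]
      exact Equiv.prod_comp _ _
    have hd := h.1.det_eq_prod_eigenvalues
    rw [hdet] at hd
    have hr : (∏ i, h.1.eigenvalues i : ℝ) = 0 := by
      rw [← RCLike.ofReal_prod, eq_comm, RCLike.ofReal_eq_zero] at hd
      exact hd
    rw [e1, e2, hr]
  have hmono : g 0 ≤ g 1 := Tuple.monotone_sort h.1.eigenvalues (by decide : (0 : Fin 2) ≤ 1)
  have h0 : 0 ≤ g 0 := h.eigenvalues_nonneg _
  rcases mul_eq_zero.mp hprod with h' | h'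
  · rw [h']; linarith
  · rw [h'] at hmono; linarith

lemma passive2_halfid :
    passiveEnergy ![(-1 : ℝ), 1] ((1/2 : ℂ) • (1 : Matrix (Fin 2) (Fin 2) ℂ)) = 0 := by
  have h : ((1/2 : ℂ) • (1 : Matrix (Fin 2) (Fin 2) ℂ)).IsHermitian := by
    unfold Matrix.IsHermitian
    rw [Matrix.conjTranspose_smul, Matrix.conjTranspose_one]
    norm_num
  rw [passive2 h]
  set g := h.eigenvalues ∘ (Tuple.sort h.eigenvalues) with hg
  have htr : ((1/2 : ℂ) • (1 : Matrix (Fin 2) (Fin 2) ℂ)).trace = 1 := by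
    simp [Matrix.trace_smul, Matrix.trace_one]
  have hdet : ((1/2 : ℂ) • (1 : Matrix (Fin 2) (Fin 2) ℂ)).det = 1/4 := by
    rw [Matrix.det_smul, Matrix.det_one]
    norm_num
  have hsum : g 0 + g 1 = 1 := by
    have e1 : g 0 + g 1 = ∑ k, g k := (Fin.sum_univ_two g).symm
    have e2 : ∑ k, g k = ∑ i, h.eigenvalues i := by
      simp only [hg, Function.comp]
      exact Equiv.sum_comp _ _
    have e3 := re_trace_eq_sum_eig h
    rw [htr, Complex.one_re] at e3
    rw [e1, e2, ← e3]
  have hprod : g 0 * g 1 = 1/4 := by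
    have e1 : g 0 * g 1 = ∏ k, g k := (Fin.prod_univ_two g).symm
    have e2 : ∏ k, g k = ∏ i, h.eigenvalues i := by
      simp only [hg, Function.comp]
      exact Equiv.prod_comp _ _
    have hd := h.det_eq_prod_eigenvalues
    rw [hdet] at hd
    have hr : (∏ i, h.eigenvalues i : ℝ) = 1/4 := by
      rw [← RCLike.ofReal_prod] at hd
      have h14 : ((1/4 : ℝ) : ℂ) = RCLike.ofReal (∏ i, h.eigenvalues i) := by
        rw [← hd]; norm_num
      exact (RCLike.ofReal_inj.mp h14).symm
    rw [e1, e2, hr]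
  nlinarith [sq_nonneg (g 0 - g 1)]


lemma ptrA_trace {d m : ℕ} (M : Matrix (Fin d × Fin m) (Fin d × Fin m) ℂ) :
    (ptrA M).trace = M.trace := by
  rw [Matrix.trace, Matrix.trace]
  conv_rhs => rw [Fintype.sum_prod_type]
  rfl

lemma ptrA_isHermitian {d m : ℕ} {M : Matrix (Fin d × Fin m) (Fin d × Fin m) ℂ}
    (h : M.IsHermitian) : (ptrA M).IsHermitian := by
  ext i j
  simp only [Matrix.conjTranspose_apply, ptrA, star_sum]
  refine Finset.sum_congr rfl fun a _ => ?_
  have := congrFun (congrFun h (i, a)) (j, a)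
  simpa [Matrix.conjTranspose_apply] using this

lemma ptrA_posSemidef {d m : ℕ} {M : Matrix (Fin d × Fin m) (Fin d × Fin m) ℂ}
    (h : M.PosSemidef) : (ptrA M).PosSemidef := by
  refine Matrix.PosSemidef.of_dotProduct_mulVec_nonneg (ptrA_isHermitian h.1) fun x => ?_
  have term : ∀ a : Fin m, dotProduct
      (star (fun p : Fin d × Fin m => if p.2 = a then x p.1 else 0))
      (M *ᵥ (fun p : Fin d × Fin m => if p.2 = a then x p.1 else 0))
      = ∑ i : Fin d, ∑ j : Fin d, star (x i) * (M (i, a) (j, a) * x j) := by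
    intro a
    simp only [dotProduct, Matrix.mulVec, Pi.star_apply, Fintype.sum_prod_type,
      apply_ite (star : ℂ → ℂ), star_zero, ite_mul, zero_mul, mul_ite, mul_zero,
      Finset.sum_ite_eq', Finset.mem_univ, if_true]
    refine Finset.sum_congr rfl fun i _ => ?_
    simp [Finset.mul_sum]
  have lhs : dotProduct (star x) ((ptrA M) *ᵥ x)
      = ∑ a : Fin m, ∑ i : Fin d, ∑ j : Fin d, star (x i) * (M (i, a) (j, a) * x j) := by
    simp only [dotProduct, Matrix.mulVec, ptrA, Pi.star_apply, Finset.mul_sum,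
      Finset.sum_mul]
    have s1 : ∀ i : Fin d, (∑ j : Fin d, ∑ a : Fin m, star (x i) * (M (i, a) (j, a) * x j))
        = ∑ a : Fin m, ∑ j : Fin d, star (x i) * (M (i, a) (j, a) * x j) := fun i =>
      Finset.sum_comm
    calc ∑ i : Fin d, ∑ j : Fin d, ∑ a : Fin m, star (x i) * (M (i, a) (j, a) * x j)
        = ∑ i : Fin d, ∑ a : Fin m, ∑ j : Fin d, star (x i) * (M (i, a) (j, a) * x j) :=
          Finset.sum_congr rfl fun i _ => s1 i
      _ = ∑ a : Fin m, ∑ i : Fin d, ∑ j : Fin d, star (x i) * (M (i, a) (j, a) * x j) :=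
          Finset.sum_comm
  rw [lhs]
  refine Finset.sum_nonneg fun a _ => ?_
  rw [← term a]
  exact h.dotProduct_mulVec_nonneg _

lemma one_kronecker_sum {d m : ℕ} {n : ℕ} (P : Fin n → Matrix (Fin m) (Fin m) ℂ) :
    (1 : Matrix (Fin d) (Fin d) ℂ) ⊗ₖ (∑ a, P a) = ∑ a, (1 : Matrix (Fin d) (Fin d) ℂ) ⊗ₖ (P a) := by
  ext p q
  simp [Matrix.kroneckerMap_apply, Finset.mul_sum, Matrix.sum_apply]

lemma one_kronecker_isHermitian {d m : ℕ} {P : Matrix (Fin m) (Fin m) ℂ}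
    (h : P.IsHermitian) : ((1 : Matrix (Fin d) (Fin d) ℂ) ⊗ₖ P).IsHermitian := by
  ext p q
  simp only [Matrix.conjTranspose_apply, Matrix.kroneckerMap_apply, star_mul']
  rw [← Matrix.conjTranspose_apply, ← Matrix.conjTranspose_apply, h, Matrix.conjTranspose_one]



lemma bellMix_isHermitian (C : ℝ) : (bellMix C).IsHermitian := by
  ext p q
  fin_cases p <;> fin_cases q <;>
    simp [bellMix, Matrix.conjTranspose_apply, Prod.ext_iff]

lemma bellMix_trace (C : ℝ) : (bellMix C).trace = 1 := by
  rw [Matrix.trace]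
  rw [Fintype.sum_prod_type]
  simp [Matrix.diag, bellMix, Fin.sum_univ_two, Prod.ext_iff]
  norm_num

lemma ptrA_bellMix (C : ℝ) :
    ptrA (bellMix C) = (1/2 : ℂ) • (1 : Matrix (Fin 2) (Fin 2) ℂ) := by
  ext i j
  fin_cases i <;> fin_cases j <;>
    simp [ptrA, bellMix, Fin.sum_univ_two, Prod.ext_iff, Matrix.one_apply]

lemma bellMix_posSemidef {C : ℝ} (hC0 : 0 ≤ C) (hC1 : C ≤ 1) :
    (bellMix C).PosSemidef := by
  refine Matrix.PosSemidef.of_dotProduct_mulVec_nonneg (bellMix_isHermitian C) fun x => ?_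
  have expand : dotProduct (star x) ((bellMix C) *ᵥ x) =
      star (x (0,0)) * x (0,0) * ((1/2 : ℝ) : ℂ) + star (x (1,1)) * x (1,1) * ((1/2 : ℝ) : ℂ) +
      ((C/2 : ℝ) : ℂ) * (star (x (0,0)) * x (1,1) + star (x (1,1)) * x (0,0)) := by
    simp only [dotProduct, Matrix.mulVec, Pi.star_apply, Fintype.sum_prod_type,
      Fin.sum_univ_two, bellMix, Prod.ext_iff]
    push_cast
    norm_num
    ring
  rw [expand]
  set a := x (0,0)
  set b := x (1,1)
  rw [Complex.le_def]
  constructor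
  · simp only [Complex.add_re, Complex.mul_re, Complex.add_im, Complex.mul_im,
      Complex.ofReal_re, Complex.ofReal_im, Complex.zero_re, RCLike.star_def,
      Complex.conj_re, Complex.conj_im]
    nlinarith [sq_nonneg (a.re + b.re), sq_nonneg (a.im + b.im), sq_nonneg (a.re - b.re),
      sq_nonneg (a.im - b.im), mul_nonneg hC0 (sq_nonneg (a.re + b.re)),
      mul_nonneg hC0 (sq_nonneg (a.im + b.im)),
      mul_nonneg (sub_nonneg.mpr hC1) (sq_nonneg a.re),
      mul_nonneg (sub_nonneg.mpr hC1) (sq_nonneg a.im),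
      mul_nonneg (sub_nonneg.mpr hC1) (sq_nonneg b.re),
      mul_nonneg (sub_nonneg.mpr hC1) (sq_nonneg b.im)]
  · simp only [Complex.add_im, Complex.mul_im, Complex.add_re, Complex.mul_re,
      Complex.ofReal_re, Complex.ofReal_im, Complex.zero_im, RCLike.star_def,
      Complex.conj_re, Complex.conj_im]
    ring

lemma compMeas_isHermitian : ∀ a, (compMeas a).IsHermitian := by
  intro a
  fin_cases a <;> (ext i j; fin_cases i <;> fin_cases j <;> simp [compMeas])

lemma compMeas_orth : ∀ a b, compMeas a * compMeas b = if a = b then compMeas a else 0 := by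
  intro a b
  fin_cases a <;> fin_cases b <;>
    (ext i j; fin_cases i <;> fin_cases j <;>
      simp [compMeas, Matrix.mul_apply, Fin.sum_univ_two])

lemma compMeas_sum : ∑ a, compMeas a = 1 := by
  rw [Fin.sum_univ_two]
  ext i j
  fin_cases i <;> fin_cases j <;> simp [compMeas, Matrix.one_apply]

lemma outcomeProb_bellMix (C : ℝ) (a : Fin 2) :
    outcomeProb (bellMix C) (compMeas a) = 1/2 := by
  fin_cases a <;>
  · rw [outcomeProb, Matrix.trace]
    rw [Fintype.sum_prod_type]
    norm_num [Matrix.diag, Matrix.mul_apply, Fintype.sum_prod_type, Fin.sum_univ_two,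
      Matrix.kroneckerMap_apply, Matrix.one_apply, bellMix, compMeas, Prod.ext_iff]

lemma condState_bellMix_zero (C : ℝ) :
    condState (bellMix C) (compMeas 0) = !![1, 0; 0, 0] := by
  rw [condState, outcomeProb_bellMix]
  ext i j
  fin_cases i <;> fin_cases j <;>
    norm_num [ptrA, Matrix.mul_apply, Fintype.sum_prod_type, Fin.sum_univ_two,
      Matrix.kroneckerMap_apply, Matrix.one_apply, bellMix, compMeas, Prod.ext_iff,
      Matrix.smul_apply]

lemma condState_bellMix_one (C : ℝ) :
    condState (bellMix C) (compMeas 1) = !![0, 0; 0, 1] := by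
  rw [condState, outcomeProb_bellMix]
  ext i j
  fin_cases i <;> fin_cases j <;>
    norm_num [ptrA, Matrix.mul_apply, Fintype.sum_prod_type, Fin.sum_univ_two,
      Matrix.kroneckerMap_apply, Matrix.one_apply, bellMix, compMeas, Prod.ext_iff,
      Matrix.smul_apply]

lemma passive_e00 : passiveEnergy ![(-1 : ℝ), 1] (!![1, 0; 0, 0] : Matrix (Fin 2) (Fin 2) ℂ) = -1 := by
  have hd : (!![1, 0; 0, 0] : Matrix (Fin 2) (Fin 2) ℂ) = Matrix.diagonal ![1, 0] := by
    ext i j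
    fin_cases i <;> fin_cases j <;> simp [Matrix.diagonal]
  refine passive2_projlike ?_ ?_ ?_
  · rw [hd]
    refine Matrix.posSemidef_diagonal_iff.mpr ?_
    intro i
    fin_cases i <;> norm_num
  · simp [Matrix.trace_fin_two]
  · simp [Matrix.det_fin_two_of]

lemma passive_e11 : passiveEnergy ![(-1 : ℝ), 1] (!![0, 0; 0, 1] : Matrix (Fin 2) (Fin 2) ℂ) = -1 := by
  have hd : (!![0, 0; 0, 1] : Matrix (Fin 2) (Fin 2) ℂ) = Matrix.diagonal ![0, 1] := by
    ext i j
    fin_cases i <;> fin_cases j <;> simp [Matrix.diagonal]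
  refine passive2_projlike ?_ ?_ ?_
  · rw [hd]
    refine Matrix.posSemidef_diagonal_iff.mpr ?_
    intro i
    fin_cases i <;> norm_num
  · simp [Matrix.trace_fin_two]
  · simp [Matrix.det_fin_two_of]


lemma psd_trace_re_nonneg {n : Type*} [Fintype n] [DecidableEq n] {A : Matrix n n ℂ}
    (h : A.PosSemidef) : 0 ≤ A.trace.re := by
  rw [re_trace_eq_sum_eig h.1]
  exact Finset.sum_nonneg fun i _ => h.eigenvalues_nonneg i

lemma herm_trace_eq_ofReal {n : Type*} [Fintype n] {A : Matrix n n ℂ}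
    (h : A.IsHermitian) : A.trace = (A.trace.re : ℂ) := by
  have ht := Matrix.trace_conjTranspose A
  rw [h.eq] at ht
  exact (Complex.conj_eq_iff_re.mp ht.symm).symm

lemma smul_posSemidef {n : Type*} [Fintype n] [DecidableEq n] {A : Matrix n n ℂ}
    (h : A.PosSemidef) {c : ℝ} (hc : 0 ≤ c) : (c • A).PosSemidef := by
  refine Matrix.PosSemidef.of_dotProduct_mulVec_nonneg ?_ ?_
  · unfold Matrix.IsHermitian
    rw [Matrix.conjTranspose_smul, h.1]
    congr 1
  · intro x
    have key : dotProduct (star x) ((c • A) *ᵥ x)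
        = (c : ℂ) * dotProduct (star x) (A *ᵥ x) := by
      simp only [dotProduct, Matrix.mulVec, Matrix.smul_apply, Pi.star_apply,
        Complex.real_smul, Finset.mul_sum]
      refine Finset.sum_congr rfl fun i _ => ?_
      refine Finset.sum_congr rfl fun j _ => ?_
      ring
    rw [key]
    have hc' : (0 : ℂ) ≤ (c : ℂ) := by exact_mod_cast hc
    exact mul_nonneg hc' (h.dotProduct_mulVec_nonneg x)

lemma meas_bound {C : ℝ} (hC0 : 0 ≤ C) (hC1 : C ≤ 1) {n : ℕ}
    (P : Fin n → Matrix (Fin 2) (Fin 2) ℂ)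
    (hherm : ∀ a, (P a).IsHermitian)
    (horth : ∀ a b, P a * P b = if a = b then P a else 0)
    (hsum : ∑ a, P a = 1) :
    passiveEnergy ![(-1 : ℝ), 1] (ptrA (bellMix C)) -
      ∑ a, outcomeProb (bellMix C) (P a) *
        passiveEnergy ![(-1 : ℝ), 1] (condState (bellMix C) (P a)) ≤ 1 := by
  have hρpsd : (bellMix C).PosSemidef := bellMix_posSemidef hC0 hC1
  rw [ptrA_bellMix, passive2_halfid]
  set ρ := bellMix C with hρ
  set B : Fin n → Matrix (Fin 2 × Fin 2) (Fin 2 × Fin 2) ℂ :=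
    fun a => (1 : Matrix (Fin 2) (Fin 2) ℂ) ⊗ₖ (P a) with hB
  have hBa : ∀ a, (1 : Matrix (Fin 2) (Fin 2) ℂ) ⊗ₖ (P a) = B a := fun a => rfl
  have hBherm : ∀ a, (B a).IsHermitian := fun a => one_kronecker_isHermitian (hherm a)
  have hBB : ∀ a, B a * B a = B a := by
    intro a
    rw [← hBa, ← Matrix.mul_kronecker_mul, Matrix.one_mul, horth a a, if_pos rfl]
  have hMpsd : ∀ a, (B a * ρ * B a).PosSemidef := by
    intro a
    have := hρpsd.mul_mul_conjTranspose_same (B a)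
    rwa [(hBherm a).eq] at this
  have houtcome : ∀ a, outcomeProb ρ (P a) = (B a * ρ * B a).trace.re := by
    intro a
    have e : (B a * ρ * B a).trace = (B a * ρ).trace := by
      rw [Matrix.trace_mul_cycle (B a) ρ (B a), hBB a]
    rw [outcomeProb, hBa, e]
  have hp_nonneg : ∀ a, 0 ≤ outcomeProb ρ (P a) := by
    intro a
    rw [houtcome a]
    exact psd_trace_re_nonneg (hMpsd a)
  have hterm : ∀ a, -(outcomeProb ρ (P a)) ≤ outcomeProb ρ (P a) *
      passiveEnergy ![(-1 : ℝ), 1] (condState ρ (P a)) := by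
    intro a
    rcases eq_or_lt_of_le (hp_nonneg a) with h0 | h0
    · rw [← h0]
      simp
    · have hcpsd : (condState ρ (P a)).PosSemidef := by
        rw [condState, hBa]
        exact smul_posSemidef (ptrA_posSemidef (hMpsd a)) (inv_nonneg.mpr (hp_nonneg a))
      have htrc : (condState ρ (P a)).trace.re = 1 := by
        rw [condState, hBa, Matrix.trace_smul, ptrA_trace]
        rw [herm_trace_eq_ofReal (hMpsd a).1, ← houtcome a]
        rw [Complex.real_smul, ← Complex.ofReal_mul, Complex.ofReal_re]
        field_simp
      have hge := passive2_ge hcpsd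
      rw [htrc] at hge
      nlinarith [hp_nonneg a]
  have hsum_p : ∑ a, outcomeProb ρ (P a) = 1 := by
    calc ∑ a, outcomeProb ρ (P a) = ∑ a, ((B a * ρ).trace).re := rfl
      _ = (∑ a, (B a * ρ).trace).re := by rw [Complex.re_sum]
      _ = ((∑ a, B a * ρ)).trace.re := by rw [Matrix.trace_sum]
      _ = (((∑ a, B a) * ρ)).trace.re := by rw [Finset.sum_mul]
      _ = (((1 : Matrix (Fin 2) (Fin 2) ℂ) ⊗ₖ (∑ a, P a)) * ρ).trace.re := by
          rw [one_kronecker_sum]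
      _ = (((1 : Matrix (Fin 2) (Fin 2) ℂ) ⊗ₖ (1 : Matrix (Fin 2) (Fin 2) ℂ)) * ρ).trace.re := by
          rw [hsum]
      _ = (ρ.trace).re := by rw [Matrix.one_kronecker_one, Matrix.one_mul]
      _ = 1 := by rw [hρ, bellMix_trace]; norm_num
  have hfin : (-1 : ℝ) ≤ ∑ a, outcomeProb ρ (P a) *
      passiveEnergy ![(-1 : ℝ), 1] (condState ρ (P a)) := by
    calc (-1 : ℝ) = ∑ a, -(outcomeProb ρ (P a)) := by
          rw [← hsum_p]
          rw [Finset.sum_neg_distrib]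
      _ ≤ _ := Finset.sum_le_sum fun a _ => hterm a
  linarith

/-- for the state (|00⟩⟨00|+|11⟩⟨11|+C(|00⟩⟨11|+h.c.))/2 with
H_S = −σ_z: the reduced state is 1/2, so W = 0; the computational-basis
measurement yields pure conditional states and W_{Πₐ} = 1; hence δW = 1
(the maximum), independently of C. -/
theorem bellMix_maximal_gain (C : ℝ) (hC0 : 0 ≤ C) (hC1 : C ≤ 1) :
    ptrA (bellMix C) = (1/2 : ℂ) • (1 : Matrix (Fin 2) (Fin 2) ℂ) ∧
    ((ptrA (bellMix C)) * (!![-1, 0; 0, 1] : Matrix (Fin 2) (Fin 2) ℂ)).trace.re -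
        passiveEnergy ![(-1 : ℝ), 1] (ptrA (bellMix C)) = 0 ∧
    ((ptrA (bellMix C)) * (!![-1, 0; 0, 1] : Matrix (Fin 2) (Fin 2) ℂ)).trace.re -
        ∑ a, outcomeProb (bellMix C) (compMeas a) *
          passiveEnergy ![(-1 : ℝ), 1] (condState (bellMix C) (compMeas a)) = 1 ∧
    deltaW ![(-1 : ℝ), 1] (bellMix C) = 1 := by
  have h1 := ptrA_bellMix C
  have hW : ((ptrA (bellMix C)) * (!![-1, 0; 0, 1] : Matrix (Fin 2) (Fin 2) ℂ)).trace.re = 0 := by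
    rw [h1]
    rw [Matrix.smul_mul, Matrix.one_mul, Matrix.trace_smul, Matrix.trace_fin_two]
    norm_num
  have hpass0 : passiveEnergy ![(-1 : ℝ), 1] (ptrA (bellMix C)) = 0 := by
    rw [h1]
    exact passive2_halfid
  have hmeassum : ∑ a, outcomeProb (bellMix C) (compMeas a) *
      passiveEnergy ![(-1 : ℝ), 1] (condState (bellMix C) (compMeas a)) = -1 := by
    rw [Fin.sum_univ_two, outcomeProb_bellMix, outcomeProb_bellMix,
      condState_bellMix_zero, condState_bellMix_one, passive_e00, passive_e11]
    norm_num
  refine ⟨h1, by rw [hW, hpass0]; norm_num, by rw [hW, hmeassum]; norm_num, ?_⟩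
  have hmem : (1 : ℝ) ∈ {g : ℝ | ∃ (n : ℕ) (P : Fin n → Matrix (Fin 2) (Fin 2) ℂ),
      (∀ a, (P a).IsHermitian) ∧ (∀ a b, P a * P b = if a = b then P a else 0) ∧
      (∑ a, P a = 1) ∧
      g = passiveEnergy ![(-1 : ℝ), 1] (ptrA (bellMix C)) -
        ∑ a, outcomeProb (bellMix C) (P a) *
          passiveEnergy ![(-1 : ℝ), 1] (condState (bellMix C) (P a))} := by
    refine ⟨2, compMeas, compMeas_isHermitian, compMeas_orth, compMeas_sum, ?_⟩
    rw [hpass0, hmeassum]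
    norm_num
  have hub : ∀ g ∈ {g : ℝ | ∃ (n : ℕ) (P : Fin n → Matrix (Fin 2) (Fin 2) ℂ),
      (∀ a, (P a).IsHermitian) ∧ (∀ a b, P a * P b = if a = b then P a else 0) ∧
      (∑ a, P a = 1) ∧
      g = passiveEnergy ![(-1 : ℝ), 1] (ptrA (bellMix C)) -
        ∑ a, outcomeProb (bellMix C) (P a) *
          passiveEnergy ![(-1 : ℝ), 1] (condState (bellMix C) (P a))}, g ≤ 1 := by
    rintro g ⟨n, P, hherm, horth, hsum, rfl⟩
    exact meas_bound hC0 hC1 P hherm horth hsum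
  rw [deltaW]
  exact le_antisymm (csSup_le ⟨1, hmem⟩ hub) (le_csSup ⟨1, hub⟩ hmem)
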